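/- Subsolution lower bound via superadditivity: if 1 ≤ k < n and w(z) = -|z|^{2-2n/k} + R^{2-2n/k} - 1 + a|z|²/R² with a > 0, then at every z ≠ 0 the eigenvalue vector of the complex Hessian of w lies in Γ_k and H_k[w]^{1/k} ≥ C(n,k)^{1/k}·a·R^{-2}. -/

import Mathlib

open scoped BigOperators
noncomputable section

/-- The `k`-th elementary symmetric function of `lam` over an index set `s`. -/
def esymmOn {n : ℕ} (s : Finset (Fin n)) (k : ℕ) (lam : Fin n → ℝ) : ℝ :=
  ∑ t ∈ s.powersetCard k, ∏ i ∈ t, lam i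

/-- The `k`-th elementary symmetric polynomial `S_k` on `ℝ^n`. -/
def esymm' (n k : ℕ) (lam : Fin n → ℝ) : ℝ := esymmOn Finset.univ k lam

/-- The Gårding cone `Γ_k = {λ : S_i(λ) > 0, 1 ≤ i ≤ k}`. -/
def Gamma (n k : ℕ) : Set (Fin n → ℝ) :=
  {lam | ∀ i : ℕ, 1 ≤ i → i ≤ k → 0 < esymm' n i lam}
/-- The Wirtinger derivative `∂u/∂z_i`. -/
def wdz {n : ℕ} (u : (Fin n → ℂ) → ℂ) (i : Fin n) (z : Fin n → ℂ) : ℂ :=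
  (1/2 : ℂ) * (fderiv ℝ u z (Pi.single i 1) - Complex.I * fderiv ℝ u z (Pi.single i Complex.I))

/-- The Wirtinger derivative `∂u/∂z̄_i`. -/
def wdzbar {n : ℕ} (u : (Fin n → ℂ) → ℂ) (i : Fin n) (z : Fin n → ℂ) : ℂ :=
  (1/2 : ℂ) * (fderiv ℝ u z (Pi.single i 1) + Complex.I * fderiv ℝ u z (Pi.single i Complex.I))

/-- The complex Hessian matrix `(∂²u/∂z_i∂z̄_j)`. -/
def cHess {n : ℕ} (u : (Fin n → ℂ) → ℂ) (z : Fin n → ℂ) : Matrix (Fin n) (Fin n) ℂ :=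
  Matrix.of fun i j => wdz (fun w => wdzbar u j w) i z


open Complex

lemma hasFDerivAt_sumNormSq (n : ℕ) (x : Fin n → ℂ) :
    HasFDerivAt (fun y : Fin n → ℂ => ∑ i, Complex.normSq (y i))
      (∑ i : Fin n, ((2 * (x i).re) • (Complex.reCLM.comp (ContinuousLinearMap.proj (R := ℝ) (φ := fun _ : Fin n => ℂ) i)) + (2 * (x i).im) • (Complex.imCLM.comp (ContinuousLinearMap.proj i)))) x := by
  apply HasFDerivAt.fun_sum
  intro i _
  have hre : HasFDerivAt (fun y : Fin n → ℂ => (y i).re) (Complex.reCLM.comp (ContinuousLinearMap.proj i)) x := by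
    exact (Complex.reCLM.comp (ContinuousLinearMap.proj (R := ℝ) (φ := fun _ : Fin n => ℂ) i)).hasFDerivAt
  have him : HasFDerivAt (fun y : Fin n → ℂ => (y i).im) (Complex.imCLM.comp (ContinuousLinearMap.proj i)) x := by
    exact (Complex.imCLM.comp (ContinuousLinearMap.proj (R := ℝ) (φ := fun _ : Fin n => ℂ) i)).hasFDerivAt
  have h := (hre.mul hre).add (him.mul him)
  have heq : (fun y : Fin n → ℂ => Complex.normSq (y i)) = fun y => (y i).re * (y i).re + (y i).im * (y i).im := by
    funext y; simp [Complex.normSq_apply]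
  rw [heq]
  convert h using 1
  ext v
  simp
  module

def Dt (n : ℕ) (x : Fin n → ℂ) : (Fin n → ℂ) →L[ℝ] ℝ :=
  ∑ i : Fin n, ((2 * (x i).re) • (Complex.reCLM.comp (ContinuousLinearMap.proj (R := ℝ) (φ := fun _ : Fin n => ℂ) i)) + (2 * (x i).im) • (Complex.imCLM.comp (ContinuousLinearMap.proj i)))

lemma Dt_single (n : ℕ) (x : Fin n → ℂ) (j : Fin n) (c : ℂ) :
    Dt n x (Pi.single j c) = 2 * (x j).re * c.re + 2 * (x j).im * c.im := by
  simp [Dt, ContinuousLinearMap.sum_apply, Pi.single_apply]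
  rw [Finset.sum_eq_single j] <;> simp +contextual

lemma f_deriv (p C₀ b : ℝ) {s : ℝ} (hs : s ≠ 0) :
    HasDerivAt (fun t : ℝ => -t ^ p + C₀ + b * t) (-(p * s ^ (p - 1)) + b) s := by
  have h1 := Real.hasDerivAt_rpow_const (x := s) (p := p) (Or.inl hs)
  have h2 : HasDerivAt (fun t : ℝ => b * t) b s := by
    simpa using (hasDerivAt_id s).const_mul b
  simpa using (h1.neg.add_const C₀).fun_add h2

lemma w_deriv (n : ℕ) (p C₀ b : ℝ) (x : Fin n → ℂ) (hs : (∑ i, Complex.normSq (x i)) ≠ 0) :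
    HasFDerivAt (fun y : Fin n → ℂ => ((-((∑ i, Complex.normSq (y i)) ^ p) + C₀ + b * (∑ i, Complex.normSq (y i)) : ℝ) : ℂ))
      (Complex.ofRealCLM.comp ((-(p * (∑ i, Complex.normSq (x i)) ^ (p - 1)) + b) • Dt n x)) x := by
  have h1 := hasFDerivAt_sumNormSq n x
  have h2 := f_deriv p C₀ b hs
  have h3 := h2.comp_hasFDerivAt x h1
  exact Complex.ofRealCLM.hasFDerivAt.comp x h3

lemma wdzbar_eq (n : ℕ) (p C₀ b : ℝ) (w : (Fin n → ℂ) → ℂ)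
    (hw : w = fun y : Fin n → ℂ => ((-((∑ i, Complex.normSq (y i)) ^ p) + C₀ + b * (∑ i, Complex.normSq (y i)) : ℝ) : ℂ))
    (j : Fin n) (x : Fin n → ℂ) (hs : (∑ i, Complex.normSq (x i)) ≠ 0) :
    wdzbar w j x = ((-(p * (∑ i, Complex.normSq (x i)) ^ (p - 1)) + b : ℝ) : ℂ) * x j := by
  subst hw
  have h := (w_deriv n p C₀ b x hs).fderiv
  rw [wdzbar, h]
  simp [Dt_single, Complex.ext_iff]
  ring_nf
  exact ⟨trivial, trivial⟩

lemma g_deriv (n : ℕ) (p b : ℝ) (j : Fin n) (x : Fin n → ℂ) (hs : (∑ i, Complex.normSq (x i)) ≠ 0) :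
    HasFDerivAt (fun y : Fin n → ℂ => ((-(p * (∑ i, Complex.normSq (y i)) ^ (p - 1)) + b : ℝ) : ℂ) * y j)
      ((((-(p * (∑ i, Complex.normSq (x i)) ^ (p - 1)) + b : ℝ) : ℂ)) • (ContinuousLinearMap.proj (R := ℝ) (φ := fun _ : Fin n => ℂ) j)
        + (x j) • (Complex.ofRealCLM.comp ((-(p * (p-1) * (∑ i, Complex.normSq (x i)) ^ (p - 2))) • Dt n x))) x := by
  have hF : HasDerivAt (fun s : ℝ => -(p * s ^ (p - 1)) + b)
      (-(p * (p-1) * (∑ i, Complex.normSq (x i)) ^ (p - 2))) (∑ i, Complex.normSq (x i)) := by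
    have h1 := Real.hasDerivAt_rpow_const (x := (∑ i, Complex.normSq (x i))) (p := p - 1) (Or.inl hs)
    have := ((h1.const_mul p).neg).add_const b
    exact this.congr_deriv (by ring_nf)
  have h2 : HasFDerivAt (fun y : Fin n → ℂ => ((-(p * (∑ i, Complex.normSq (y i)) ^ (p - 1)) + b : ℝ) : ℂ))
      (Complex.ofRealCLM.comp ((-(p * (p-1) * (∑ i, Complex.normSq (x i)) ^ (p - 2))) • Dt n x)) x :=
    by have h4 := hF.comp_hasFDerivAt x (hasFDerivAt_sumNormSq n x); exact Complex.ofRealCLM.hasFDerivAt.comp x h4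
  have h3 : HasFDerivAt (fun y : Fin n → ℂ => y j) (ContinuousLinearMap.proj (R := ℝ) (φ := fun _ : Fin n => ℂ) j) x :=
    (ContinuousLinearMap.proj (R := ℝ) (φ := fun _ : Fin n => ℂ) j).hasFDerivAt
  exact h2.mul h3

lemma cHess_eq (n : ℕ) (p C₀ b : ℝ) (w : (Fin n → ℂ) → ℂ)
    (hw : w = fun y : Fin n → ℂ => ((-((∑ i, Complex.normSq (y i)) ^ p) + C₀ + b * (∑ i, Complex.normSq (y i)) : ℝ) : ℂ))
    (x : Fin n → ℂ) (hs : (∑ i, Complex.normSq (x i)) ≠ 0) (i j : Fin n) :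
    cHess w x i j = ((-(p * (p-1) * (∑ i, Complex.normSq (x i)) ^ (p - 2)) : ℝ) : ℂ) * (starRingEnd ℂ) (x i) * x j
      + ((-(p * (∑ i, Complex.normSq (x i)) ^ (p - 1)) + b : ℝ) : ℂ) * (if i = j then 1 else 0) := by
  have hopen : IsOpen {y : Fin n → ℂ | (∑ i, Complex.normSq (y i)) ≠ 0} := by
    have hc : Continuous fun y : Fin n → ℂ => ∑ i, Complex.normSq (y i) := by
      continuity
    exact (isOpen_ne (x := (0:ℝ))).preimage hc
  have hmem : x ∈ {y : Fin n → ℂ | (∑ i, Complex.normSq (y i)) ≠ 0} := hs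
  have hev : (fun y => wdzbar w j y) =ᶠ[nhds x]
      (fun y : Fin n → ℂ => ((-(p * (∑ i, Complex.normSq (y i)) ^ (p - 1)) + b : ℝ) : ℂ) * y j) := by
    filter_upwards [hopen.mem_nhds hmem] with y hy
    exact wdzbar_eq n p C₀ b w hw j y hy
  have hfd : fderiv ℝ (fun y => wdzbar w j y) x
      = ((((-(p * (∑ i, Complex.normSq (x i)) ^ (p - 1)) + b : ℝ) : ℂ)) • (ContinuousLinearMap.proj (R := ℝ) (φ := fun _ : Fin n => ℂ) j)
        + (x j) • (Complex.ofRealCLM.comp ((-(p * (p-1) * (∑ i, Complex.normSq (x i)) ^ (p - 2))) • Dt n x))) := by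
    rw [hev.fderiv_eq]
    exact (g_deriv n p b j x hs).fderiv
  rw [cHess]
  show wdz (fun y => wdzbar w j y) i x = _
  rw [wdz, hfd]
  by_cases hij : i = j
  · subst hij
    simp [Dt_single, Pi.single_apply, Complex.ext_iff]
    constructor <;> ring
  · simp [Dt_single, Pi.single_apply, hij, Ne.symm hij, Complex.ext_iff]
    constructor <;> ring

lemma det_rank_one (n : ℕ) (hn : 1 ≤ n) (c β : ℝ) (x : Fin n → ℂ)
    (M : Matrix (Fin n) (Fin n) ℂ)
    (hM : ∀ i j, M i j = (c : ℂ) * (starRingEnd ℂ) (x i) * x j + (β : ℂ) * (if i = j then 1 else 0))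
    (xx : ℂ) (hxx : xx ≠ (β : ℂ)) :
    (xx • (1 : Matrix (Fin n) (Fin n) ℂ) - M).det
      = (xx - β) ^ (n - 1) * (xx - ((β : ℂ) + (c : ℂ) * ((∑ i, Complex.normSq (x i) : ℝ) : ℂ))) := by
  have hne : xx - (β : ℂ) ≠ 0 := sub_ne_zero.mpr hxx
  set u : Fin n → ℂ := fun i => (-(xx - (β : ℂ))⁻¹ * c) * (starRingEnd ℂ) (x i) with hu
  have key : xx • (1 : Matrix (Fin n) (Fin n) ℂ) - M
      = (xx - β) • ((1 : Matrix (Fin n) (Fin n) ℂ) + Matrix.replicateCol Unit u * Matrix.replicateRow Unit x) := by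
    ext i j
    simp [hM i j, Matrix.mul_apply, Matrix.one_apply, hu]
    by_cases hij : i = j
    · subst hij; simp; field_simp; ring
    · simp [hij]; field_simp
  rw [key, Matrix.det_smul, Matrix.det_one_add_replicateCol_mul_replicateRow]
  have hdot : dotProduct x u = -(xx - (β : ℂ))⁻¹ * c * ((∑ i, Complex.normSq (x i) : ℝ) : ℂ) := by
    simp [dotProduct, hu, Complex.ofReal_sum]
    rw [Finset.mul_sum]
    apply Finset.sum_congr rfl
    intro i _
    have := Complex.mul_conj (x i)
    calc x i * ((xx - (β:ℂ))⁻¹ * ↑c * (starRingEnd ℂ) (x i)) = (x i * (starRingEnd ℂ) (x i)) * ((xx - (β:ℂ))⁻¹ * ↑c) := by ring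
    _ = _ := by rw [this]; ring
  rw [hdot]
  have hcard : (Fintype.card (Fin n)) = n - 1 + 1 := by simp; omega
  rw [hcard, pow_succ]
  field_simp
  ring

open Polynomial in
lemma det_smul_one_sub_eq (n : ℕ) (M : Matrix (Fin n) (Fin n) ℂ) (hM : M.IsHermitian) (xx : ℂ) :
    (xx • (1 : Matrix (Fin n) (Fin n) ℂ) - M).det = ∏ i, (xx - (hM.eigenvalues i : ℂ)) := by
  set V : Matrix (Fin n) (Fin n) ℂ := (Matrix.IsHermitian.eigenvectorUnitary hM : Matrix (Fin n) (Fin n) ℂ) with hV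
  have hVmem := (Matrix.IsHermitian.eigenvectorUnitary hM).2
  have hVU : V * star V = 1 := (Matrix.mem_unitaryGroup_iff).mp hVmem
  have hUV : star V * V = 1 := (Matrix.mem_unitaryGroup_iff').mp hVmem
  have hspec := hM.spectral_theorem
  simp only [Unitary.conjStarAlgAut_apply, Unitary.coe_star, ← hV] at hspec
  have key : xx • (1 : Matrix (Fin n) (Fin n) ℂ) - M
      = V * (xx • (1 : Matrix (Fin n) (Fin n) ℂ) - Matrix.diagonal (RCLike.ofReal ∘ hM.eigenvalues)) * star V := by
    rw [Matrix.mul_sub, Matrix.sub_mul, ← hspec, Matrix.mul_smul, mul_one, Matrix.smul_mul, hVU]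
  rw [key, Matrix.det_mul, Matrix.det_mul, mul_comm (V.det), mul_assoc, ← Matrix.det_mul, hVU]
  rw [Matrix.det_one, mul_one]
  rw [Matrix.smul_one_eq_diagonal, Matrix.diagonal_sub, Matrix.det_diagonal]
  rfl

open Polynomial in
lemma eig_multiset (n : ℕ) (hn : 1 ≤ n) (c β : ℝ) (x : Fin n → ℂ)
    (M : Matrix (Fin n) (Fin n) ℂ) (hM : M.IsHermitian)
    (hMe : ∀ i j, M i j = (c : ℂ) * (starRingEnd ℂ) (x i) * x j + (β : ℂ) * (if i = j then 1 else 0)) :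
    (Finset.univ.val.map hM.eigenvalues)
      = (β + c * (∑ i, Complex.normSq (x i))) ::ₘ Multiset.replicate (n - 1) β := by
  set t : ℝ := ∑ i, Complex.normSq (x i) with ht
  set lam : ℝ := β + c * t with hlam
  set p : ℂ[X] := ∏ i, (X - C ((hM.eigenvalues i : ℝ) : ℂ)) with hp
  set q : ℂ[X] := (X - C ((lam : ℝ) : ℂ)) * (X - C ((β : ℝ) : ℂ)) ^ (n - 1) with hq
  have heval : ∀ xx : ℂ, xx ≠ (β : ℂ) → p.eval xx = q.eval xx := by
    intro xx hxx
    have h1 : p.eval xx = ∏ i, (xx - (hM.eigenvalues i : ℂ)) := by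
      simp [hp, eval_prod]
    have h2 : q.eval xx = (xx - lam) * (xx - (β:ℂ)) ^ (n-1) := by
      simp [hq]
    rw [h1, h2, ← det_smul_one_sub_eq n M hM xx, det_rank_one n hn c β x M hMe xx hxx]
    simp only [hlam, ht]
    push_cast
    ring
  have hpq : p = q := by
    have hinf : Set.Infinite {xx : ℂ | IsRoot (p - q) xx} := by
      apply Set.Infinite.mono (s := {xx : ℂ | xx ≠ (β:ℂ)})
      · intro xx hxx
        simp only [Set.mem_setOf_eq, IsRoot, eval_sub]
        rw [heval xx hxx]; ring
      · exact Set.Finite.infinite_compl (Set.finite_singleton _)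
    have h0 := Polynomial.eq_zero_of_infinite_isRoot (p - q) hinf
    exact sub_eq_zero.mp h0
  have hrootsp : p = (((Finset.univ.val.map hM.eigenvalues).map (fun r : ℝ => (r:ℂ))).map (fun a => X - C a)).prod := by
    rw [hp, Finset.prod_eq_multiset_prod, Multiset.map_map, Multiset.map_map]
    rfl
  have hrootsq : q = (((lam ::ₘ Multiset.replicate (n-1) β).map (fun r : ℝ => (r:ℂ))).map (fun a => X - C a)).prod := by
    simp [hq, Multiset.map_cons, Multiset.map_replicate, Multiset.prod_replicate]
  have h5 : (Finset.univ.val.map hM.eigenvalues).map (fun r : ℝ => (r:ℂ))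
      = ((lam ::ₘ Multiset.replicate (n-1) β).map fun r : ℝ => (r:ℂ)) := by
    have e1 := Polynomial.roots_multiset_prod_X_sub_C ((Finset.univ.val.map hM.eigenvalues).map (fun r : ℝ => (r:ℂ)))
    have e2 := Polynomial.roots_multiset_prod_X_sub_C (((lam ::ₘ Multiset.replicate (n-1) β)).map (fun r : ℝ => (r:ℂ)))
    rw [← hrootsp] at e1
    rw [← hrootsq] at e2
    rw [← e1, ← e2, hpq]
  exact Multiset.map_injective Complex.ofReal_injective h5

lemma exists_index (n : ℕ) (eig : Fin n → ℝ) (lam β : ℝ)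
    (h : Finset.univ.val.map eig = lam ::ₘ Multiset.replicate (n-1) β) :
    ∃ j : Fin n, eig j = lam ∧ ∀ i, i ≠ j → eig i = β := by
  have hmem : lam ∈ Finset.univ.val.map eig := by
    rw [h]; exact Multiset.mem_cons_self _ _
  obtain ⟨j, -, hj⟩ := Multiset.mem_map.mp hmem
  refine ⟨j, hj, ?_⟩
  have hjmem : j ∈ (Finset.univ : Finset (Fin n)).val := Finset.mem_univ_val j
  have hsplit : (Finset.univ : Finset (Fin n)).val = j ::ₘ (Finset.univ.val.erase j) :=
    (Multiset.cons_erase hjmem).symm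
  have h2 : eig j ::ₘ (Finset.univ.val.erase j).map eig = lam ::ₘ Multiset.replicate (n-1) β := by
    rw [← Multiset.map_cons, ← hsplit, h]
  rw [hj] at h2
  have h3 : (Finset.univ.val.erase j).map eig = Multiset.replicate (n-1) β :=
    (Multiset.cons_inj_right lam).mp h2
  intro i hi
  have hi' : i ∈ Finset.univ.val.erase j := by
    rw [Multiset.mem_erase_of_ne hi]
    exact Finset.mem_univ_val i
  have : eig i ∈ (Finset.univ.val.erase j).map eig := Multiset.mem_map_of_mem eig hi'
  rw [h3] at this
  exact Multiset.eq_of_mem_replicate this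

lemma esymm_rank_one (n : ℕ) (j : Fin n) (lam β : ℝ) (eig : Fin n → ℝ)
    (hj : eig j = lam) (ho : ∀ i, i ≠ j → eig i = β) (m : ℕ) (hm : 1 ≤ m) :
    esymm' n m eig = ((n-1).choose m : ℝ) * β ^ m + ((n-1).choose (m-1) : ℝ) * lam * β ^ (m-1) := by
  obtain ⟨m', rfl⟩ : ∃ m', m = m' + 1 := ⟨m - 1, by omega⟩
  have hcard : (Finset.univ.erase j).card = n - 1 := by
    rw [Finset.card_erase_of_mem (Finset.mem_univ j), Finset.card_univ, Fintype.card_fin]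
  have huniv : (Finset.univ : Finset (Fin n)) = insert j (Finset.univ.erase j) :=
    (Finset.insert_erase (Finset.mem_univ j)).symm
  rw [esymm', esymmOn]
  rw [huniv, Finset.powersetCard_succ_insert (Finset.notMem_erase j _)]
  have hdisj : Disjoint ((Finset.univ.erase j).powersetCard (m'+1))
      (((Finset.univ.erase j).powersetCard m').image (insert j)) := by
    rw [Finset.disjoint_left]
    intro t ht ht'
    obtain ⟨s, hs, rfl⟩ := Finset.mem_image.mp ht'
    have hts := (Finset.mem_powersetCard.mp ht).1
    have : j ∈ Finset.univ.erase j := hts (Finset.mem_insert_self j s)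
    exact (Finset.notMem_erase j _) this
  rw [Finset.sum_union hdisj]
  have hinj : Set.InjOn (insert j) (((Finset.univ.erase j).powersetCard m' : Finset (Finset (Fin n))) : Set (Finset (Fin n))) := by
    intro s hs s' hs' hss
    have hjs : j ∉ s := fun hc => (Finset.notMem_erase j _)
      ((Finset.mem_powersetCard.mp (Finset.mem_coe.mp hs)).1 hc)
    have hjs' : j ∉ s' := fun hc => (Finset.notMem_erase j _)
      ((Finset.mem_powersetCard.mp (Finset.mem_coe.mp hs')).1 hc)
    rw [← Finset.erase_insert hjs, ← Finset.erase_insert hjs', hss]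
  rw [Finset.sum_image hinj]
  have h1 : ∑ t ∈ (Finset.univ.erase j).powersetCard (m'+1), ∏ i ∈ t, eig i
      = ((n-1).choose (m'+1) : ℝ) * β ^ (m'+1) := by
    have step : ∀ t ∈ (Finset.univ.erase j).powersetCard (m'+1), ∏ i ∈ t, eig i = β ^ (m'+1) := by
      intro t ht
      obtain ⟨hts, htc⟩ := Finset.mem_powersetCard.mp ht
      rw [Finset.prod_congr rfl (fun i hi => ho i (Finset.ne_of_mem_erase (hts hi))),
        Finset.prod_const, htc]
    rw [Finset.sum_congr rfl step, Finset.sum_const, ← hcard,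
      Finset.card_powersetCard, nsmul_eq_mul, hcard]
  have h2 : ∑ t ∈ (Finset.univ.erase j).powersetCard m', ∏ i ∈ insert j t, eig i
      = ((n-1).choose m' : ℝ) * lam * β ^ m' := by
    have step : ∀ t ∈ (Finset.univ.erase j).powersetCard m', ∏ i ∈ insert j t, eig i = lam * β ^ m' := by
      intro t ht
      obtain ⟨hts, htc⟩ := Finset.mem_powersetCard.mp ht
      have hjt : j ∉ t := fun hc => (Finset.notMem_erase j _) (hts hc)
      rw [Finset.prod_insert hjt, hj,
        Finset.prod_congr rfl (fun i hi => ho i (Finset.ne_of_mem_erase (hts hi))),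
        Finset.prod_const, htc]
    rw [Finset.sum_congr rfl step, Finset.sum_const, ← hcard,
      Finset.card_powersetCard, nsmul_eq_mul, hcard]
    ring
  rw [h1, h2]
  simp

lemma Sm_bound (n k m : ℕ) (hk : 1 ≤ k) (hkn : k < n) (hm : 1 ≤ m) (hmk : m ≤ k)
    (b T q : ℝ) (hb : 0 < b) (hT : 0 < T) (hq : q = ((n : ℝ) - k) / k) :
    (n.choose m : ℝ) * b ^ m ≤
      ((n-1).choose m : ℝ) * (b + q * T) ^ m
        + ((n-1).choose (m-1) : ℝ) * (b - q ^ 2 * T) * (b + q * T) ^ (m-1) := by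
  obtain ⟨m', rfl⟩ : ∃ m', m = m' + 1 := ⟨m - 1, by omega⟩
  have hkR : (0 : ℝ) < k := by exact_mod_cast hk
  have hq0 : 0 ≤ q := by
    rw [hq]
    apply div_nonneg _ hkR.le
    have : (k : ℝ) ≤ n := by exact_mod_cast hkn.le
    linarith
  set C1 : ℝ := ((n-1).choose (m'+1) : ℝ) with hC1
  set C2 : ℝ := ((n-1).choose m' : ℝ) with hC2
  have hnat1 : (n-1).choose m' + (n-1).choose (m'+1) = n.choose (m'+1) := by
    rw [show n = n-1+1 by omega, Nat.choose_succ_succ]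
    congr 1 <;> congr 1 <;> omega
  have hnat2 : (n - k) * ((n-1).choose m') ≤ k * ((n-1).choose (m'+1)) := by
    have hid : (n-1).choose (m'+1) * (m'+1) = (n-1).choose m' * ((n-1) - m') :=
      Nat.choose_succ_right_eq (n-1) m'
    calc (n - k) * ((n-1).choose m') ≤ ((n-1) - m') * ((n-1).choose m') := by
          apply Nat.mul_le_mul_right; omega
      _ = (n-1).choose (m'+1) * (m'+1) := by rw [hid]; ring
      _ ≤ k * ((n-1).choose (m'+1)) := by
          have hstep := Nat.mul_le_mul (show m'+1 ≤ k by omega) (Nat.le_refl ((n-1).choose (m'+1)))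
          exact le_trans (Nat.le_of_eq (Nat.mul_comm _ _)) hstep
  have hC : C2 * q ≤ C1 := by
    have hcast : ((n - k : ℕ) : ℝ) = (n : ℝ) - k := by
      have hkn' : k ≤ n := hkn.le
      push_cast [hkn']
      ring
    have h2 : ((n : ℝ) - k) * C2 ≤ (k : ℝ) * C1 := by
      rw [← hcast, hC1, hC2]
      exact_mod_cast hnat2
    have e : C2 * q = (((n : ℝ) - k) * C2) / k := by rw [hq]; ring
    rw [e, div_le_iff₀ hkR]
    linarith
  set β : ℝ := b + q * T with hβ
  have hβb : b ≤ β := by nlinarith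
  have hβ0 : 0 < β := lt_of_lt_of_le hb hβb
  have e1 : C1 * β ^ (m'+1) + C2 * (b - q^2 * T) * β ^ (m'+1-1)
      = β ^ m' * ((C1 + C2) * b + (C1 - C2 * q) * (q * T)) := by
    simp only [Nat.add_sub_cancel]
    rw [pow_succ, hβ]
    ring
  have h2 : (C1 + C2 : ℝ) = (n.choose (m'+1) : ℝ) := by
    rw [hC1, hC2, ← hnat1]
    push_cast
    ring
  have h4 : (n.choose (m'+1) : ℝ) * b ≤ (C1 + C2) * b + (C1 - C2 * q) * (q * T) := by
    rw [h2]
    have : 0 ≤ (C1 - C2 * q) * (q * T) := by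
      apply mul_nonneg (by linarith) (mul_nonneg hq0 hT.le)
    linarith
  have h5 : b ^ m' ≤ β ^ m' := pow_le_pow_left₀ hb.le hβb m'
  calc (n.choose (m'+1) : ℝ) * b ^ (m'+1)
      = b ^ m' * ((n.choose (m'+1) : ℝ) * b) := by rw [pow_succ]; ring
    _ ≤ β ^ m' * ((n.choose (m'+1) : ℝ) * b) := by
        apply mul_le_mul_of_nonneg_right h5
        positivity
    _ ≤ β ^ m' * ((C1 + C2) * b + (C1 - C2 * q) * (q * T)) := by
        apply mul_le_mul_of_nonneg_left h4 (by positivity)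
    _ = C1 * β ^ (m'+1) + C2 * (b - q^2 * T) * β ^ (m'+1-1) := e1.symm

/-- For `w(z) = -|z|^{2-2n/k} + R^{2-2n/k} - 1 + a|z|²/R²` with `a > 0`, at every `z ≠ 0`
the complex Hessian eigenvalues lie in `Γ_k` and `H_k[w]^{1/k} ≥ C(n,k)^{1/k} a R^{-2}`. -/
theorem stmt_10 (n k : ℕ) (hk : 1 ≤ k) (hkn : k < n) (a R : ℝ) (ha : 0 < a) (hR : 0 < R)
    (w : (Fin n → ℂ) → ℂ)
    (hw : ∀ z : Fin n → ℂ,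
      w z = ((-((∑ i, Complex.normSq (z i)) ^ ((1 : ℝ) - (n : ℝ) / k))
        + R ^ ((2 : ℝ) - 2 * (n : ℝ) / k) - 1
        + a * (∑ i, Complex.normSq (z i)) / R ^ 2 : ℝ) : ℂ))
    (z : Fin n → ℂ) (hz : z ≠ 0) :
    ∃ hH : (cHess w z).IsHermitian,
      hH.eigenvalues ∈ Gamma n k ∧
      esymm' n k hH.eigenvalues ^ ((1 : ℝ) / k)
        ≥ (n.choose k : ℝ) ^ ((1 : ℝ) / k) * a / R ^ 2 := by
  classical
  have hn1 : 1 ≤ n := le_of_lt (lt_of_le_of_lt hk hkn)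
  have hk0 : (0:ℝ) < k := by exact_mod_cast hk
  set t : ℝ := ∑ i, Complex.normSq (z i) with ht
  have ht0 : 0 < t := by
    obtain ⟨i0, hi0⟩ : ∃ i, z i ≠ 0 := by
      by_contra hcon
      push_neg at hcon
      exact hz (funext hcon)
    exact Finset.sum_pos' (fun i _ => Complex.normSq_nonneg _)
      ⟨i0, Finset.mem_univ _, Complex.normSq_pos.mpr hi0⟩
  set p : ℝ := (1 : ℝ) - (n : ℝ)/k with hp
  set b : ℝ := a / R^2 with hb
  have hb0 : 0 < b := by positivity
  set C₀ : ℝ := R ^ ((2:ℝ) - 2*(n:ℝ)/k) - 1 with hC₀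
  have hwfun : w = fun y : Fin n → ℂ =>
      ((-((∑ i, Complex.normSq (y i)) ^ p) + C₀ + b * (∑ i, Complex.normSq (y i)) : ℝ) : ℂ) := by
    funext y
    rw [hw y]
    norm_cast
    rw [hC₀, hb, hp]
    field_simp
    push_cast
    ring_nf
  set c : ℝ := -(p*(p-1)*t^(p-2)) with hc
  set β : ℝ := -(p*t^(p-1)) + b with hβ
  have hMe : ∀ i j, cHess w z i j
      = (c:ℂ) * (starRingEnd ℂ) (z i) * z j + (β:ℂ)*(if i=j then 1 else 0) := by
    intro i j
    rw [cHess_eq n p C₀ b w hwfun z (ne_of_gt ht0) i j]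
  have hH : (cHess w z).IsHermitian := by
    show Matrix.conjTranspose (cHess w z) = cHess w z
    ext i j
    rw [Matrix.conjTranspose_apply, hMe j i, hMe i j]
    by_cases hij : i = j
    · subst hij
      simp [Complex.ext_iff]
      first
      | (constructor <;> ring)
      | ring
    · simp [hij, Ne.symm hij, Complex.ext_iff]
      first
      | (constructor <;> ring)
      | ring
  have hms := eig_multiset n hn1 c β z (cHess w z) hH hMe
  set lam : ℝ := β + c * t with hlam
  obtain ⟨j, hj, ho⟩ := exists_index n hH.eigenvalues lam β (by rw [hms])
  set q : ℝ := ((n:ℝ) - k)/k with hq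
  set T : ℝ := t ^ (p-1) with hT
  have hT0 : 0 < T := Real.rpow_pos_of_pos ht0 _
  have hqp : -p = q := by
    rw [hp, hq]
    field_simp
    ring
  have hβeq : β = b + q * T := by
    rw [hβ, ← hqp]
    ring
  have hlameq : lam = b - q^2 * T := by
    have hct : c * t = -(p*(p-1)) * T := by
      rw [hc, hT]
      have : t ^ (p-2) * t = t ^ (p-1) := by
        nth_rewrite 2 [← Real.rpow_one t]
        rw [← Real.rpow_add ht0]
        congr 1
        ring
      calc -(p * (p - 1) * t ^ (p - 2)) * t = -(p*(p-1)) * (t ^ (p-2) * t) := by ring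
        _ = -(p*(p-1)) * t ^ (p-1) := by rw [this]
    rw [hlam, hct, hβeq, ← hqp]
    ring
  have hSm : ∀ m, 1 ≤ m → m ≤ k → (n.choose m : ℝ) * b^m ≤ esymm' n m hH.eigenvalues := by
    intro m h1 h2
    rw [esymm_rank_one n j lam β hH.eigenvalues hj ho m h1, hβeq, hlameq]
    have := Sm_bound n k m hk hkn h1 h2 b T q hb0 hT0 hq
    linarith
  refine ⟨hH, ?_, ?_⟩
  · intro m h1 h2
    have hc1 : (0:ℝ) < (n.choose m : ℝ) := by
      exact_mod_cast Nat.choose_pos (le_of_lt (lt_of_le_of_lt h2 hkn))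
    have := hSm m h1 h2
    have hbm : (0:ℝ) < b ^ m := pow_pos hb0 m
    nlinarith
  · have hSk := hSm k hk le_rfl
    have hC0 : (0:ℝ) < (n.choose k : ℝ) := by
      exact_mod_cast Nat.choose_pos hkn.le
    have h1 : ((n.choose k : ℝ) * b^k) ^ ((1:ℝ)/k) ≤ esymm' n k hH.eigenvalues ^ ((1:ℝ)/k) :=
      Real.rpow_le_rpow (by positivity) hSk (by positivity)
    have h2 : ((n.choose k : ℝ) * b^k) ^ ((1:ℝ)/k) = (n.choose k : ℝ)^((1:ℝ)/k) * b := by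
      rw [Real.mul_rpow hC0.le (by positivity)]
      congr 1
      rw [← Real.rpow_natCast b k, ← Real.rpow_mul hb0.le]
      rw [show (k:ℝ) * ((1:ℝ)/k) = 1 by field_simp]
      exact Real.rpow_one b
    rw [ge_iff_le, show (n.choose k : ℝ) ^ ((1:ℝ)/k) * a / R ^ 2 = (n.choose k : ℝ)^((1:ℝ)/k) * b by rw [hb]; ring]
    rw [← h2]
    exact h1
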